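/- Let $\Xi_N = (\Xi_{ij})_{1\le i,j\le N}$ be an $N\times N$ symmetric centered Gaussian random matrix with $\mathbb{E}[\Xi_{ij}\Xi_{kl}] = \mathcal{F}(i,j,k,l)$ where $\mathcal{F}$ is a fully symmetric function of its four arguments, and let $B_N$ be a deterministic real symmetric $N\times N$ matrix. Then $\mathbb{E}[\det(\Xi_N + B_N)] = \det(B_N)$. -/

import Mathlib

open MeasureTheory ProbabilityTheory

/-- A symmetric centered Gaussian random matrix: every linear combination of its
entries is a centered Gaussian random variable. -/
def IsCenteredGaussianMatrix {Ω : Type*} [MeasureSpace Ω] {n : ℕ}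
    (Ξ : Fin n → Fin n → Ω → ℝ) : Prop :=
  ∀ a : Fin n → Fin n → ℝ, ∃ v : NNReal,
    Measure.map (fun ω => ∑ i, ∑ j, a i j * Ξ i j ω) (ℙ : Measure Ω) = gaussianReal 0 v

open Real
open scoped NNReal ENNReal

section AuxAll


lemma aux_pow_le_exp {y : ℝ} (hy : 0 ≤ y) (n : ℕ) : y ^ n / n.factorial ≤ Real.exp y := by
  have h := Real.sum_le_exp_of_nonneg hy (n + 1)
  refine le_trans ?_ h
  have : y ^ n / n.factorial = ∑ i ∈ {n}, y ^ i / i.factorial := by simp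
  rw [this]
  apply Finset.sum_le_sum_of_subset_of_nonneg
  · simp [Finset.singleton_subset_iff, Finset.mem_range]
  · intro i _ _
    positivity

lemma aux_integrable_pow_mul_exp {b : ℝ} (hb : 0 < b) (n : ℕ) :
    Integrable (fun x : ℝ => x ^ n * Real.exp (-b * x ^ 2)) := by
  have hb2 : 0 < b / 2 := by linarith
  have hmaj : Integrable (fun x : ℝ => Real.exp (-b * x ^ 2)
      + (n.factorial * ((b / 2)⁻¹) ^ n) * Real.exp (-(b / 2) * x ^ 2)) :=
    (integrable_exp_neg_mul_sq hb).add ((integrable_exp_neg_mul_sq hb2).const_mul _)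
  refine hmaj.mono' ?_ ?_
  · exact (Continuous.mul (continuous_pow n)
      (Real.continuous_exp.comp (by continuity))).aestronglyMeasurable
  · filter_upwards with x
    have hexp : (0:ℝ) < Real.exp (-b * x ^ 2) := Real.exp_pos _
    rw [Real.norm_eq_abs, abs_mul, abs_of_pos hexp, abs_pow]
    have key : |x| ^ n ≤ 1 + (n.factorial * ((b / 2)⁻¹) ^ n) * Real.exp (b / 2 * x ^ 2) := by
      rcases le_total (|x|) 1 with h | h
      · have : |x| ^ n ≤ 1 := pow_le_one₀ (abs_nonneg x) h
        have h2 : (0:ℝ) ≤ (n.factorial * ((b / 2)⁻¹) ^ n) * Real.exp (b / 2 * x ^ 2) := by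
          positivity
        linarith
      · have h1 : |x| ^ n ≤ (x ^ 2) ^ n := by
          apply pow_le_pow_left₀ (abs_nonneg x) ?_ n
          nlinarith [abs_nonneg x, sq_abs x]
        have h2 : (x ^ 2) ^ n ≤ (n.factorial * ((b / 2)⁻¹) ^ n) * Real.exp (b / 2 * x ^ 2) := by
          have h3 := aux_pow_le_exp (y := b / 2 * x ^ 2) (by positivity) n
          rw [mul_pow] at h3
          have h4 : (b / 2) ^ n * (x ^ 2) ^ n ≤ n.factorial * Real.exp (b / 2 * x ^ 2) := by
            rw [div_le_iff₀ (by positivity)] at h3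
            linarith [h3]
          calc (x ^ 2) ^ n = ((b / 2)⁻¹) ^ n * ((b / 2) ^ n * (x ^ 2) ^ n) := by
                rw [← mul_assoc, ← mul_pow, inv_mul_cancel₀ (by positivity), one_pow, one_mul]
            _ ≤ ((b / 2)⁻¹) ^ n * (n.factorial * Real.exp (b / 2 * x ^ 2)) := by
                apply mul_le_mul_of_nonneg_left h4 (by positivity)
            _ = (n.factorial * ((b / 2)⁻¹) ^ n) * Real.exp (b / 2 * x ^ 2) := by ring
        have h0 : (0:ℝ) ≤ 1 := zero_le_one
        linarith
    calc |x| ^ n * Real.exp (-b * x ^ 2)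
        ≤ (1 + (n.factorial * ((b / 2)⁻¹) ^ n) * Real.exp (b / 2 * x ^ 2))
            * Real.exp (-b * x ^ 2) := by
          apply mul_le_mul_of_nonneg_right key hexp.le
      _ = Real.exp (-b * x ^ 2)
          + (n.factorial * ((b / 2)⁻¹) ^ n) * Real.exp (-(b / 2) * x ^ 2) := by
          rw [add_mul, one_mul, mul_assoc, ← Real.exp_add]
          ring_nf

lemma aux_integral_pow_mul_exp_rec {b : ℝ} (hb : 0 < b) (n : ℕ) :
    ∫ x : ℝ, x ^ (n + 2) * Real.exp (-b * x ^ 2)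
      = ((n + 1) / (2 * b)) * ∫ x : ℝ, x ^ n * Real.exp (-b * x ^ 2) := by
  set f : ℝ → ℝ := fun x => x ^ (n + 1) * Real.exp (-b * x ^ 2) with hf
  set f' : ℝ → ℝ := fun x =>
    (n + 1) * (x ^ n * Real.exp (-b * x ^ 2)) + (-(2 * b)) * (x ^ (n + 2) * Real.exp (-b * x ^ 2))
    with hf'
  have hderiv : ∀ x, HasDerivAt f (f' x) x := by
    intro x
    have h1 : HasDerivAt (fun x : ℝ => x ^ (n + 1)) ((n + 1 : ℕ) * x ^ n) x := by
      simpa using hasDerivAt_pow (n + 1) x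
    have h2 : HasDerivAt (fun x : ℝ => Real.exp (-b * x ^ 2))
        (Real.exp (-b * x ^ 2) * (-b * (2 * x))) x := by
      apply HasDerivAt.exp
      simpa using (hasDerivAt_pow 2 x).const_mul (-b)
    have := h1.mul h2
    refine this.congr_deriv ?_
    simp only [hf']
    push_cast
    ring
  have hint : Integrable f' := by
    apply Integrable.add
    · exact (aux_integrable_pow_mul_exp hb n).const_mul _
    · exact (aux_integrable_pow_mul_exp hb (n + 2)).const_mul _
  have hf_int : Integrable f := aux_integrable_pow_mul_exp hb (n + 1)
  have hzero : ∫ x, f' x = 0 :=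
    integral_eq_zero_of_hasDerivAt_of_integrable hderiv hint hf_int
  rw [hf', ] at hzero
  rw [integral_add ((aux_integrable_pow_mul_exp hb n).const_mul _)
    ((aux_integrable_pow_mul_exp hb (n + 2)).const_mul _), integral_const_mul,
    integral_const_mul] at hzero
  have hb' : (2 * b) ≠ 0 := by positivity
  rw [div_mul_eq_mul_div, eq_div_iff hb']
  linarith [hzero]

/-- Gaussian moment constants: c 0 = 1, c 1 = 0, c (n+2) = (n+1) c n. -/
def gmC : ℕ → ℝ
  | 0 => 1
  | 1 => 0
  | (n + 2) => (n + 1) * gmC n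

lemma aux_gaussianPDFReal_eq (v : ℝ≥0) (hv : v ≠ 0) (x : ℝ) :
    gaussianPDFReal 0 v x = (Real.sqrt (2 * Real.pi * v))⁻¹
      * Real.exp (-(2 * (v:ℝ))⁻¹ * x ^ 2) := by
  rw [gaussianPDFReal]
  rw [sub_zero]
  congr 1
  apply congrArg
  have hv' : (0:ℝ) < v := by positivity
  field_simp

lemma aux_integrable_pow_gaussianReal (v : ℝ≥0) (n : ℕ) :
    Integrable (fun x : ℝ => x ^ n) (gaussianReal 0 v) := by
  by_cases hv : v = 0
  · rw [hv, gaussianReal_zero_var]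
    refine ⟨(measurable_id.pow_const n).aestronglyMeasurable, ?_⟩
    rw [HasFiniteIntegral, lintegral_dirac]
    exact ENNReal.coe_lt_top
  · rw [gaussianReal_of_var_ne_zero _ hv]
    rw [integrable_withDensity_iff (measurable_gaussianPDF 0 v)
      (Filter.Eventually.of_forall fun x => ENNReal.ofReal_lt_top)]
    have hv' : (0:ℝ) < v := by positivity
    have hb : (0:ℝ) < (2 * (v:ℝ))⁻¹ := by positivity
    have := (aux_integrable_pow_mul_exp hb n).const_mul ((Real.sqrt (2 * Real.pi * v))⁻¹)
    apply this.congr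
    filter_upwards with x
    rw [gaussianPDF, ENNReal.toReal_ofReal (gaussianPDFReal_nonneg 0 v x),
      aux_gaussianPDFReal_eq v hv]
    ring

lemma aux_integral_gaussianReal {v : ℝ≥0} (hv : v ≠ 0) (g : ℝ → ℝ) :
    ∫ x, g x ∂(gaussianReal 0 v) = ∫ x, gaussianPDFReal 0 v x * g x := by
  rw [gaussianReal_of_var_ne_zero _ hv]
  have heq : gaussianPDF 0 v = fun x => ((gaussianPDFReal 0 v x).toNNReal : ℝ≥0∞) := rfl
  rw [heq, integral_withDensity_eq_integral_smul
    ((measurable_gaussianPDFReal 0 v).real_toNNReal) g]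
  congr 1
  funext x
  rw [NNReal.smul_def, Real.coe_toNNReal _ (gaussianPDFReal_nonneg 0 v x), smul_eq_mul]

lemma aux_integral_pow_gaussianReal_rec (v : ℝ≥0) (n : ℕ) :
    ∫ x, x ^ (n + 2) ∂(gaussianReal 0 v)
      = (n + 1) * (v : ℝ) * ∫ x, x ^ n ∂(gaussianReal 0 v) := by
  by_cases hv : v = 0
  · rw [hv, gaussianReal_zero_var]
    rw [integral_dirac]
    simp
  · have hv' : (0:ℝ) < (v:ℝ) := by positivity
    have hb : (0:ℝ) < (2 * (v:ℝ))⁻¹ := by positivity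
    rw [aux_integral_gaussianReal hv, aux_integral_gaussianReal hv]
    have h1 : ∀ m : ℕ, ∫ x, gaussianPDFReal 0 v x * x ^ m
        = (Real.sqrt (2 * Real.pi * v))⁻¹ * ∫ x, x ^ m * Real.exp (-(2 * (v:ℝ))⁻¹ * x ^ 2) := by
      intro m
      rw [← integral_const_mul]
      congr 1
      funext x
      rw [aux_gaussianPDFReal_eq v hv]
      ring
    rw [h1, h1, aux_integral_pow_mul_exp_rec hb n]
    have hv'' : (v:ℝ) ≠ 0 := ne_of_gt hv'
    field_simp

lemma aux_integral_id_gaussianReal (v : ℝ≥0) :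
    ∫ x, x ^ 1 ∂(gaussianReal 0 v) = 0 := by
  by_cases hv : v = 0
  · rw [hv, gaussianReal_zero_var, integral_dirac]
    simp
  · have hv' : (0:ℝ) < (v:ℝ) := by positivity
    have hb : (0:ℝ) < (2 * (v:ℝ))⁻¹ := by positivity
    set b := (2 * (v:ℝ))⁻¹
    rw [aux_integral_gaussianReal hv]
    have key : ∫ x : ℝ, x ^ 1 * Real.exp (-b * x ^ 2) = 0 := by
      have hderiv : ∀ x : ℝ, HasDerivAt (fun y : ℝ => (-(2 * b))⁻¹ * Real.exp (-b * y ^ 2))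
          (x ^ 1 * Real.exp (-b * x ^ 2)) x := by
        intro x
        have h2 : HasDerivAt (fun y : ℝ => Real.exp (-b * y ^ 2))
            (Real.exp (-b * x ^ 2) * (-b * (2 * x))) x := by
          apply HasDerivAt.exp
          simpa using (hasDerivAt_pow 2 x).const_mul (-b)
        have := h2.const_mul (-(2 * b))⁻¹
        refine this.congr_deriv ?_
        have hbne : b ≠ 0 := ne_of_gt hb
        field_simp
      exact integral_eq_zero_of_hasDerivAt_of_integrable hderiv
        (aux_integrable_pow_mul_exp hb 1)
        ((integrable_exp_neg_mul_sq hb).const_mul _)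
    have h1 : ∫ x, gaussianPDFReal 0 v x * x ^ 1
        = (Real.sqrt (2 * Real.pi * v))⁻¹ * ∫ x, x ^ 1 * Real.exp (-b * x ^ 2) := by
      rw [← integral_const_mul]
      congr 1
      funext x
      rw [aux_gaussianPDFReal_eq v hv]
      ring
    rw [h1, key, mul_zero]

lemma aux_integral_pow_gaussianReal (v : ℝ≥0) (m : ℕ) :
    ∫ x, x ^ m ∂(gaussianReal 0 v) = gmC m * (v : ℝ) ^ (m / 2) := by
  induction m using Nat.twoStepInduction with
  | zero => simp [gmC]
  | one =>
    have := aux_integral_id_gaussianReal v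
    simp only [pow_one] at this
    simp [gmC, this]
  | more m ih _ =>
    rw [aux_integral_pow_gaussianReal_rec v m, ih]
    have h2 : (m + 2) / 2 = m / 2 + 1 := by omega
    rw [show gmC (m + 2) = (m + 1) * gmC m from rfl, h2, pow_succ]
    ring

variable {ι : Type*} [DecidableEq ι]

lemma aux_neg_one_pow_sub {a b : ℕ} (h : b ≤ a) :
    (-1 : ℝ) ^ (a - b) = (-1) ^ a * (-1) ^ b := by
  rw [pow_sub₀ (-1 : ℝ) (by norm_num) h, ← inv_pow]
  norm_num

lemma aux_signsum (S A : Finset ι) (hA : A ⊆ S) :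
    ∑ ε ∈ S.powerset.filter (fun ε => A ⊆ ε), (-1 : ℝ) ^ (S.card - ε.card)
      = if A = S then 1 else 0 := by
  by_cases hAS : A = S
  · subst hAS
    have hset : A.powerset.filter (fun ε => A ⊆ ε) = {A} := by
      ext ε
      simp only [Finset.mem_filter, Finset.mem_powerset, Finset.mem_singleton]
      constructor
      · rintro ⟨h1, h2⟩; exact le_antisymm h1 h2
      · rintro rfl; exact ⟨le_rfl, le_rfl⟩
    rw [hset, if_pos rfl]
    simp
  · rw [if_neg hAS]
    have key : ∑ ε ∈ S.powerset.filter (fun ε => A ⊆ ε), (-1 : ℝ) ^ (S.card - ε.card)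
        = ∑ δ ∈ (S \ A).powerset, (-1 : ℝ) ^ ((S \ A).card - δ.card) := by
      apply Finset.sum_bij' (fun ε _ => ε \ A) (fun δ _ => A ∪ δ)
      · intro ε hε
        simp only [Finset.mem_filter, Finset.mem_powerset] at hε
        rw [Finset.mem_powerset]
        exact Finset.sdiff_subset_sdiff hε.1 le_rfl
      · intro δ hδ
        rw [Finset.mem_powerset] at hδ
        simp only [Finset.mem_filter, Finset.mem_powerset]
        constructor
        · exact Finset.union_subset hA (hδ.trans (Finset.sdiff_subset))
        · exact Finset.subset_union_left
      · intro ε hε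
        simp only [Finset.mem_filter, Finset.mem_powerset] at hε
        rw [Finset.union_sdiff_of_subset hε.2]
      · intro δ hδ
        rw [Finset.mem_powerset] at hδ
        rw [Finset.union_sdiff_cancel_left]
        exact Finset.disjoint_sdiff.mono_right hδ |>.symm |> fun h => h.symm
      · intro ε hε
        simp only [Finset.mem_filter, Finset.mem_powerset] at hε
        congr 1
        have h1 : ε.card ≤ S.card := Finset.card_le_card hε.1
        have h2 : A.card ≤ ε.card := Finset.card_le_card hε.2
        have h3 : (ε \ A).card = ε.card - A.card := Finset.card_sdiff_of_subset hε.2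
        have h4 : (S \ A).card = S.card - A.card := Finset.card_sdiff_of_subset hA
        omega
    rw [key]
    have hP : (S \ A).Nonempty := by
      rw [Finset.sdiff_nonempty]
      intro h
      exact hAS (le_antisymm hA h)
    have hz : ∑ δ ∈ (S \ A).powerset, (-1 : ℝ) ^ δ.card = 0 := by
      have := Finset.sum_powerset_neg_one_pow_card_of_nonempty hP
      exact_mod_cast congrArg (Int.cast : ℤ → ℝ) this
    calc ∑ δ ∈ (S \ A).powerset, (-1 : ℝ) ^ ((S \ A).card - δ.card)
        = ∑ δ ∈ (S \ A).powerset, (-1 : ℝ) ^ ((S \ A).card) * (-1) ^ δ.card := by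
          apply Finset.sum_congr rfl
          intro δ hδ
          rw [Finset.mem_powerset] at hδ
          exact aux_neg_one_pow_sub (Finset.card_le_card hδ)
      _ = (-1 : ℝ) ^ ((S \ A).card) * ∑ δ ∈ (S \ A).powerset, (-1 : ℝ) ^ δ.card := by
          rw [Finset.mul_sum]
      _ = 0 := by rw [hz, mul_zero]

/-- The set of surjections `Fin S.card → S`. -/
def polarSet (S : Finset ι) : Finset (Fin S.card → ι) :=
  (Fintype.piFinset fun _ => S).filter (fun g => Finset.image g Finset.univ = S)

lemma polarSet_nonempty (S : Finset ι) : (polarSet S).Nonempty := by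
  refine ⟨fun r => (S.equivFin.symm r : ι), ?_⟩
  simp only [polarSet, Finset.mem_filter, Fintype.mem_piFinset]
  constructor
  · intro r; exact (S.equivFin.symm r).2
  · ext j
    simp only [Finset.mem_image, Finset.mem_univ, true_and]
    constructor
    · rintro ⟨r, rfl⟩; exact (S.equivFin.symm r).2
    · intro hj; exact ⟨S.equivFin ⟨j, hj⟩, by simp⟩

lemma aux_polarization (S : Finset ι) (x : ι → ℝ) :
    ∑ ε ∈ S.powerset, (-1 : ℝ) ^ (S.card - ε.card) * (∑ i ∈ ε, x i) ^ S.card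
      = ((polarSet S).card : ℝ) * ∏ i ∈ S, x i := by
  have step1 : ∑ ε ∈ S.powerset, (-1 : ℝ) ^ (S.card - ε.card) * (∑ i ∈ ε, x i) ^ S.card
      = ∑ ε ∈ S.powerset, ∑ g ∈ Fintype.piFinset (fun _ : Fin S.card => ε),
          (-1 : ℝ) ^ (S.card - ε.card) * ∏ r, x (g r) := by
    apply Finset.sum_congr rfl
    intro ε _
    rw [Finset.sum_pow', Finset.mul_sum]
  rw [step1]
  have step2 : ∑ ε ∈ S.powerset, ∑ g ∈ Fintype.piFinset (fun _ : Fin S.card => ε),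
          (-1 : ℝ) ^ (S.card - ε.card) * ∏ r, x (g r)
      = ∑ g ∈ Fintype.piFinset (fun _ : Fin S.card => S),
          ∑ ε ∈ S.powerset.filter (fun ε => Finset.image g Finset.univ ⊆ ε),
          (-1 : ℝ) ^ (S.card - ε.card) * ∏ r, x (g r) := by
    apply Finset.sum_comm'
    intro ε g
    simp only [Fintype.mem_piFinset, Finset.mem_powerset, Finset.mem_filter,
      Finset.image_subset_iff]
    constructor
    · rintro ⟨h1, h2⟩
      exact ⟨⟨h1, fun r _ => h2 r⟩, fun r => h1 (h2 r)⟩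
    · rintro ⟨⟨h1, h2⟩, _⟩
      exact ⟨h1, fun r => h2 r (Finset.mem_univ r)⟩
  rw [step2]
  have step3 : ∀ g ∈ Fintype.piFinset (fun _ : Fin S.card => S),
      ∑ ε ∈ S.powerset.filter (fun ε => Finset.image g Finset.univ ⊆ ε),
          (-1 : ℝ) ^ (S.card - ε.card) * ∏ r, x (g r)
      = (if Finset.image g Finset.univ = S then 1 else 0) * ∏ r, x (g r) := by
    intro g hg
    rw [← Finset.sum_mul]
    congr 1
    apply aux_signsum
    rw [Finset.image_subset_iff]
    rw [Fintype.mem_piFinset] at hg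
    exact fun r _ => hg r
  rw [Finset.sum_congr rfl step3]
  have step4 : ∑ g ∈ Fintype.piFinset (fun _ : Fin S.card => S),
      (if Finset.image g Finset.univ = S then 1 else 0) * ∏ r, x (g r)
      = ∑ g ∈ polarSet S, ∏ r, x (g r) := by
    rw [polarSet, Finset.sum_filter]
    apply Finset.sum_congr rfl
    intro g _
    by_cases h : Finset.image g Finset.univ = S <;> simp [h]
  rw [step4]
  have step5 : ∀ g ∈ polarSet S, ∏ r, x (g r) = ∏ i ∈ S, x i := by
    intro g hg
    simp only [polarSet, Finset.mem_filter, Fintype.mem_piFinset] at hg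
    have hinj : Set.InjOn g ↑(Finset.univ : Finset (Fin S.card)) := by
      apply Finset.injOn_of_card_image_eq
      rw [hg.2, Finset.card_univ, Fintype.card_fin]
    conv_rhs => rw [← hg.2]
    exact (Finset.prod_image (fun a ha b hb h => hinj ha hb h)).symm
  rw [Finset.sum_congr rfl step5, Finset.sum_const, nsmul_eq_mul]

lemma aux_cover_step {k : ℕ} (E : Fin k → Finset ι) (hcard : ∀ r, (E r).card ≤ 2)
    (hScard : 2 * k ≤ (Finset.univ.biUnion E).card) (r0 : Fin k) :
    (E r0).card = 2 ∧ ∀ s, s ≠ r0 → Disjoint (E r0) (E s) := by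
  have hk : 0 < k := r0.pos
  have hsplit : Finset.univ.biUnion E = E r0 ∪ (Finset.univ.erase r0).biUnion E := by
    conv_lhs => rw [← Finset.insert_erase (Finset.mem_univ r0)]
    rw [Finset.biUnion_insert]
  have herasecard : (Finset.univ.erase r0).card = k - 1 := by
    rw [Finset.card_erase_of_mem (Finset.mem_univ r0), Finset.card_univ, Fintype.card_fin]
  have hrest : ((Finset.univ.erase r0).biUnion E).card ≤ 2 * (k - 1) := by
    calc ((Finset.univ.erase r0).biUnion E).card ≤ ∑ r ∈ Finset.univ.erase r0, (E r).card :=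
          Finset.card_biUnion_le
      _ ≤ ∑ _r ∈ Finset.univ.erase r0, 2 := Finset.sum_le_sum (fun r _ => hcard r)
      _ = 2 * (k - 1) := by rw [Finset.sum_const, herasecard]; ring
  constructor
  · have h1 : 2 * k ≤ (E r0).card + 2 * (k - 1) := by
      calc 2 * k ≤ (E r0 ∪ (Finset.univ.erase r0).biUnion E).card := by rw [← hsplit]; exact hScard
        _ ≤ (E r0).card + ((Finset.univ.erase r0).biUnion E).card := Finset.card_union_le _ _
        _ ≤ (E r0).card + 2 * (k - 1) := by omega
    have := hcard r0
    omega
  · intro s hs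
    rw [Finset.disjoint_left]
    intro x hx0 hxs
    by_contra
    have hsub : Finset.univ.biUnion E ⊆ (E r0).erase x ∪ (Finset.univ.erase r0).biUnion E := by
      intro y hy
      rw [Finset.mem_biUnion] at hy
      obtain ⟨t, _, hyt⟩ := hy
      by_cases ht : t = r0
      · subst ht
        by_cases hyx : y = x
        · subst hyx
          apply Finset.mem_union_right
          rw [Finset.mem_biUnion]
          exact ⟨s, Finset.mem_erase.mpr ⟨hs, Finset.mem_univ s⟩, hxs⟩
        · exact Finset.mem_union_left _ (Finset.mem_erase.mpr ⟨hyx, hyt⟩)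
      · apply Finset.mem_union_right
        rw [Finset.mem_biUnion]
        exact ⟨t, Finset.mem_erase.mpr ⟨ht, Finset.mem_univ t⟩, hyt⟩
    have h2 : 2 * k ≤ ((E r0).erase x ∪ (Finset.univ.erase r0).biUnion E).card :=
      hScard.trans (Finset.card_le_card hsub)
    have h3 : ((E r0).erase x).card = (E r0).card - 1 := Finset.card_erase_of_mem hx0
    have h4 := Finset.card_union_le ((E r0).erase x) ((Finset.univ.erase r0).biUnion E)
    have := hcard r0
    omega

lemma gmC_two : gmC 2 = 1 := by norm_num [gmC]

lemma gmC_odd (k : ℕ) : gmC (2 * k + 1) = 0 := by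
  induction k with
  | zero => rfl
  | succ k ih =>
    have : 2 * (k + 1) + 1 = (2 * k + 1) + 2 := by ring
    rw [this, show gmC ((2 * k + 1) + 2) = ((2 * k + 1 : ℕ) + 1) * gmC (2 * k + 1) from rfl, ih,
      mul_zero]

section AuxProb

variable {Ω : Type*} [MeasureSpace Ω] [IsProbabilityMeasure (ℙ : Measure Ω)]
variable {N : ℕ} {Ξ : Fin N → Fin N → Ω → ℝ}

lemma aux_map_ae {Y : Ω → ℝ} {v : ℝ≥0} (hv : Measure.map Y ℙ = gaussianReal 0 v) :
    AEMeasurable Y (ℙ : Measure Ω) := by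
  by_contra h
  rw [Measure.map_of_not_aemeasurable h] at hv
  have h1 : (gaussianReal 0 v) Set.univ = 1 := measure_univ
  rw [← hv] at h1
  simp at h1

lemma aux_pow_integrable {Y : Ω → ℝ} {v : ℝ≥0} (hv : Measure.map Y ℙ = gaussianReal 0 v)
    (m : ℕ) : Integrable (fun ω => Y ω ^ m) (ℙ : Measure Ω) := by
  have h1 : Integrable (fun x : ℝ => x ^ m) (Measure.map Y ℙ) := by
    rw [hv]; exact aux_integrable_pow_gaussianReal v m
  exact (integrable_map_measure (measurable_id.pow_const m).aestronglyMeasurable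
    (aux_map_ae hv)).mp h1

lemma aux_pow_integral {Y : Ω → ℝ} {v : ℝ≥0} (hv : Measure.map Y ℙ = gaussianReal 0 v)
    (m : ℕ) : ∫ ω, Y ω ^ m ∂(ℙ : Measure Ω) = gmC m * (v : ℝ) ^ (m / 2) := by
  have h := integral_map (φ := Y) (aux_map_ae hv)
    (f := fun x : ℝ => x ^ m) (measurable_id.pow_const m).aestronglyMeasurable
  rw [← h, hv, aux_integral_pow_gaussianReal]

lemma aux_rep (Ξ : Fin N → Fin N → Ω → ℝ) (p : Fin N → Fin N) (ε : Finset (Fin N)) (ω : Ω) :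
    ∑ u, ∑ w, (if w ∈ ε ∧ u = p w then (1 : ℝ) else 0) * Ξ u w ω
      = ∑ i ∈ ε, Ξ (p i) i ω := by
  rw [Finset.sum_comm]
  have inner : ∀ w, (∑ u, (if w ∈ ε ∧ u = p w then (1 : ℝ) else 0) * Ξ u w ω)
      = if w ∈ ε then Ξ (p w) w ω else 0 := by
    intro w
    by_cases hw : w ∈ ε
    · rw [if_pos hw, Finset.sum_eq_single (p w)]
      · simp [hw]
      · intro u _ hu; simp [hw, hu]
      · intro h; exact absurd (Finset.mem_univ _) h
    · rw [if_neg hw]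
      apply Finset.sum_eq_zero
      intro u _
      simp [hw]
  rw [Finset.sum_congr rfl (fun w _ => inner w)]
  simp [Finset.sum_ite_mem]

lemma aux_sum_gauss (hGauss : IsCenteredGaussianMatrix Ξ) (p : Fin N → Fin N)
    (ε : Finset (Fin N)) :
    ∃ v : ℝ≥0, Measure.map (fun ω => ∑ i ∈ ε, Ξ (p i) i ω) (ℙ : Measure Ω)
      = gaussianReal 0 v := by
  obtain ⟨v, hv⟩ := hGauss (fun u w => if w ∈ ε ∧ u = p w then 1 else 0)
  refine ⟨v, ?_⟩
  rw [← hv]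
  congr 1
  funext ω
  exact (aux_rep Ξ p ε ω).symm

lemma aux_prod_integrable (hGauss : IsCenteredGaussianMatrix Ξ) (a b c d : Fin N) :
    Integrable (fun ω => Ξ a b ω * Ξ c d ω) (ℙ : Measure Ω) := by
  obtain ⟨v1, hv1⟩ := aux_sum_gauss hGauss (fun _ => a) {b}
  obtain ⟨v2, hv2⟩ := aux_sum_gauss hGauss (fun _ => c) {d}
  obtain ⟨v3, hv3⟩ := hGauss (fun u w => (if w ∈ ({b} : Finset (Fin N)) ∧ u = a then (1:ℝ) else 0)
    + (if w ∈ ({d} : Finset (Fin N)) ∧ u = c then 1 else 0))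
  have e1 : ∀ ω, (∑ i ∈ ({b} : Finset (Fin N)), Ξ ((fun _ => a) i) i ω) = Ξ a b ω := by
    intro ω; simp
  have e2 : ∀ ω, (∑ i ∈ ({d} : Finset (Fin N)), Ξ ((fun _ => c) i) i ω) = Ξ c d ω := by
    intro ω; simp
  have hv1' : Measure.map (fun ω => Ξ a b ω) (ℙ : Measure Ω) = gaussianReal 0 v1 := by
    rw [← hv1]; congr 1; funext ω; exact (e1 ω).symm
  have hv2' : Measure.map (fun ω => Ξ c d ω) (ℙ : Measure Ω) = gaussianReal 0 v2 := by
    rw [← hv2]; congr 1; funext ω; exact (e2 ω).symm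
  have hv3' : Measure.map (fun ω => Ξ a b ω + Ξ c d ω) (ℙ : Measure Ω) = gaussianReal 0 v3 := by
    rw [← hv3]; congr 1; funext ω
    have expand : ∑ u : Fin N, ∑ w : Fin N,
        ((if w ∈ ({b} : Finset (Fin N)) ∧ u = a then (1:ℝ) else 0)
          + (if w ∈ ({d} : Finset (Fin N)) ∧ u = c then 1 else 0)) * Ξ u w ω
        = (∑ u : Fin N, ∑ w : Fin N,
            (if w ∈ ({b} : Finset (Fin N)) ∧ u = a then (1:ℝ) else 0) * Ξ u w ω)
          + ∑ u : Fin N, ∑ w : Fin N,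
            (if w ∈ ({d} : Finset (Fin N)) ∧ u = c then (1:ℝ) else 0) * Ξ u w ω := by
      simp only [add_mul, Finset.sum_add_distrib]
    rw [expand, aux_rep Ξ (fun _ => a) {b} ω, aux_rep Ξ (fun _ => c) {d} ω, e1 ω, e2 ω]
  have i1 := aux_pow_integrable hv1' 2
  have i2 := aux_pow_integrable hv2' 2
  have i3 := aux_pow_integrable hv3' 2
  have : (fun ω => Ξ a b ω * Ξ c d ω) = fun ω =>
      ((Ξ a b ω + Ξ c d ω) ^ 2 - Ξ a b ω ^ 2 - Ξ c d ω ^ 2) * (1 / 2) := by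
    funext ω; ring
  rw [this]
  exact ((i3.sub i1).sub i2).mul_const _

lemma aux_variance (hGauss : IsCenteredGaussianMatrix Ξ) {F : Fin N → Fin N → Fin N → Fin N → ℝ}
    (hcov : ∀ i j k l, ∫ ω, Ξ i j ω * Ξ k l ω ∂(ℙ : Measure Ω) = F i j k l)
    (p : Fin N → Fin N) (ε : Finset (Fin N)) {v : ℝ≥0}
    (hv : Measure.map (fun ω => ∑ i ∈ ε, Ξ (p i) i ω) (ℙ : Measure Ω) = gaussianReal 0 v) :
    (v : ℝ) = ∑ i ∈ ε, ∑ j ∈ ε, F (p i) i (p j) j := by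
  have h2 := aux_pow_integral hv 2
  rw [gmC_two, one_mul, show (2 : ℕ) / 2 = 1 from rfl, pow_one] at h2
  rw [← h2]
  have hexp : (fun ω => (∑ i ∈ ε, Ξ (p i) i ω) ^ 2)
      = fun ω => ∑ i ∈ ε, ∑ j ∈ ε, Ξ (p i) i ω * Ξ (p j) j ω := by
    funext ω
    rw [sq, Finset.sum_mul_sum]
  rw [hexp, integral_finset_sum _ (fun i _ => integrable_finset_sum _
    (fun j _ => aux_prod_integrable hGauss _ _ _ _))]
  apply Finset.sum_congr rfl
  intro i _
  rw [integral_finset_sum _ (fun j _ => aux_prod_integrable hGauss _ _ _ _)]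
  exact Finset.sum_congr rfl fun j _ => hcov _ _ _ _

lemma aux_moment (hGauss : IsCenteredGaussianMatrix Ξ) {F : Fin N → Fin N → Fin N → Fin N → ℝ}
    (hcov : ∀ i j k l, ∫ ω, Ξ i j ω * Ξ k l ω ∂(ℙ : Measure Ω) = F i j k l)
    (p : Fin N → Fin N) (ε : Finset (Fin N)) (m : ℕ) :
    Integrable (fun ω => (∑ i ∈ ε, Ξ (p i) i ω) ^ m) (ℙ : Measure Ω) ∧
    ∫ ω, (∑ i ∈ ε, Ξ (p i) i ω) ^ m ∂(ℙ : Measure Ω)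
      = gmC m * (∑ i ∈ ε, ∑ j ∈ ε, F (p i) i (p j) j) ^ (m / 2) := by
  obtain ⟨v, hv⟩ := aux_sum_gauss hGauss p ε
  exact ⟨aux_pow_integrable hv m, by
    rw [aux_pow_integral hv m, ← aux_variance hGauss hcov p ε hv]⟩

lemma aux_Xprod (hGauss : IsCenteredGaussianMatrix Ξ) {F : Fin N → Fin N → Fin N → Fin N → ℝ}
    (hcov : ∀ i j k l, ∫ ω, Ξ i j ω * Ξ k l ω ∂(ℙ : Measure Ω) = F i j k l)
    (p : Fin N → Fin N) (S : Finset (Fin N)) :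
    Integrable (fun ω => ∏ i ∈ S, Ξ (p i) i ω) (ℙ : Measure Ω) ∧
    ∫ ω, ∏ i ∈ S, Ξ (p i) i ω ∂(ℙ : Measure Ω) = ((polarSet S).card : ℝ)⁻¹ *
      ∑ ε ∈ S.powerset, (-1 : ℝ) ^ (S.card - ε.card) *
        (gmC S.card * (∑ i ∈ ε, ∑ j ∈ ε, F (p i) i (p j) j) ^ (S.card / 2)) := by
  have hK : ((polarSet S).card : ℝ) ≠ 0 :=
    Nat.cast_ne_zero.mpr (Finset.card_pos.mpr (polarSet_nonempty S)).ne'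
  have hpoint : (fun ω => ∏ i ∈ S, Ξ (p i) i ω) = fun ω => ((polarSet S).card : ℝ)⁻¹ *
      ∑ ε ∈ S.powerset, (-1 : ℝ) ^ (S.card - ε.card) * (∑ i ∈ ε, Ξ (p i) i ω) ^ S.card := by
    funext ω
    rw [aux_polarization S (fun i => Ξ (p i) i ω), inv_mul_cancel_left₀ hK]
  constructor
  · rw [hpoint]
    exact (integrable_finset_sum _
      (fun ε _ => ((aux_moment hGauss hcov p ε S.card).1).const_mul _)).const_mul _
  · rw [hpoint]
    rw [integral_const_mul, integral_finset_sum _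
      (fun ε _ => ((aux_moment hGauss hcov p ε S.card).1).const_mul _)]
    congr 1
    apply Finset.sum_congr rfl
    intro ε _
    rw [integral_const_mul, (aux_moment hGauss hcov p ε S.card).2]

end AuxProb

lemma aux_involution {N : ℕ} (F : Fin N → Fin N → Fin N → Fin N → ℝ)
    (hFsymm : ∀ (v : Fin 4 → Fin N) (σ : Equiv.Perm (Fin 4)),
      F (v 0) (v 1) (v 2) (v 3) = F (v (σ 0)) (v (σ 1)) (v (σ 2)) (v (σ 3)))
    (B : Matrix (Fin N) (Fin N) ℝ) (S : Finset (Fin N)) {k : ℕ} (hk : 0 < k)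
    (hm : S.card = 2 * k) (h : Fin k → Fin N × Fin N)
    (hh1 : ∀ r, (h r).1 ∈ S ∧ (h r).2 ∈ S)
    (hh2 : Finset.univ.biUnion (fun r => {(h r).1, (h r).2}) = S) :
    ∑ σ : Equiv.Perm (Fin N),
      (((Equiv.Perm.sign σ : ℤ) : ℝ) * ∏ i ∈ Finset.univ \ S, B (σ i) i)
        * ∏ r, F (σ (h r).1) (h r).1 (σ (h r).2) (h r).2 = 0 := by
  classical
  set E : Fin k → Finset (Fin N) := fun r => {(h r).1, (h r).2} with hE
  have hcard : ∀ r, (E r).card ≤ 2 := by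
    intro r
    refine (Finset.card_insert_le _ _).trans ?_
    simp
  have hScard : 2 * k ≤ (Finset.univ.biUnion E).card := by
    rw [hE]
    rw [hh2]
    exact hm.ge
  set r0 : Fin k := ⟨0, hk⟩ with hr0def
  obtain ⟨hc2, hdisj⟩ := aux_cover_step E hcard hScard r0
  set a := (h r0).1 with ha
  set b := (h r0).2 with hb
  have hab : a ≠ b := by
    intro hEq
    have he : E r0 = {b} := by rw [hE]; simp [← ha, ← hb, hEq]
    rw [he] at hc2
    simp at hc2
  have haS : a ∈ S := (hh1 r0).1
  have hbS : b ∈ S := (hh1 r0).2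
  have hfix : ∀ r, r ≠ r0 → ((h r).1 ≠ a ∧ (h r).1 ≠ b) ∧ ((h r).2 ≠ a ∧ (h r).2 ≠ b) := by
    intro r hr
    have hd := hdisj r hr
    rw [Finset.disjoint_right] at hd
    have h1 : (h r).1 ∈ E r := by rw [hE]; simp
    have h2 : (h r).2 ∈ E r := by rw [hE]; simp
    have h1' := hd h1
    have h2' := hd h2
    rw [hE] at h1' h2'
    simp only [Finset.mem_insert, Finset.mem_singleton, not_or, ← ha, ← hb] at h1' h2'
    exact ⟨h1', h2'⟩
  set τ := Equiv.swap a b with hτ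
  set f : Equiv.Perm (Fin N) → ℝ := fun σ =>
    (((Equiv.Perm.sign σ : ℤ) : ℝ) * ∏ i ∈ Finset.univ \ S, B (σ i) i)
      * ∏ r, F (σ (h r).1) (h r).1 (σ (h r).2) (h r).2 with hf
  have hswap : ∀ σ, f (σ * τ) = - f σ := by
    intro σ
    have hsign : ((Equiv.Perm.sign (σ * τ) : ℤ) : ℝ) = -((Equiv.Perm.sign σ : ℤ) : ℝ) := by
      rw [Equiv.Perm.sign_mul, Equiv.Perm.sign_swap hab]
      push_cast
      ring
    have happ : ∀ x, (σ * τ) x = σ (τ x) := fun x => rfl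
    have hBeq : ∏ i ∈ Finset.univ \ S, B ((σ * τ) i) i
        = ∏ i ∈ Finset.univ \ S, B (σ i) i := by
      apply Finset.prod_congr rfl
      intro i hi
      rw [Finset.mem_sdiff] at hi
      have hia : i ≠ a := fun hEq => hi.2 (hEq ▸ haS)
      have hib : i ≠ b := fun hEq => hi.2 (hEq ▸ hbS)
      rw [happ, hτ, Equiv.swap_apply_of_ne_of_ne hia hib]
    have hFr0 : F ((σ * τ) (h r0).1) (h r0).1 ((σ * τ) (h r0).2) (h r0).2
        = F (σ (h r0).1) (h r0).1 (σ (h r0).2) (h r0).2 := by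
      rw [happ, happ, ← ha, ← hb, hτ, Equiv.swap_apply_left, Equiv.swap_apply_right]
      have hkey := hFsymm ![σ a, a, σ b, b] (Equiv.swap 0 2)
      have e0 : (Equiv.swap (0 : Fin 4) 2) 0 = 2 := Equiv.swap_apply_left 0 2
      have e2 : (Equiv.swap (0 : Fin 4) 2) 2 = 0 := Equiv.swap_apply_right 0 2
      have e1 : (Equiv.swap (0 : Fin 4) 2) 1 = 1 :=
        Equiv.swap_apply_of_ne_of_ne (by decide) (by decide)
      have e3 : (Equiv.swap (0 : Fin 4) 2) 3 = 3 :=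
        Equiv.swap_apply_of_ne_of_ne (by decide) (by decide)
      rw [e0, e1, e2, e3] at hkey
      simp only [Matrix.cons_val_zero, Matrix.cons_val_one, Matrix.head_cons,
        Matrix.cons_val_two, Matrix.tail_cons, Matrix.cons_val_three] at hkey
      exact hkey.symm
    have hFeq : ∏ r, F ((σ * τ) (h r).1) (h r).1 ((σ * τ) (h r).2) (h r).2
        = ∏ r, F (σ (h r).1) (h r).1 (σ (h r).2) (h r).2 := by
      rw [← Finset.mul_prod_erase Finset.univ
        (fun r => F ((σ * τ) (h r).1) (h r).1 ((σ * τ) (h r).2) (h r).2) (Finset.mem_univ r0),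
        ← Finset.mul_prod_erase Finset.univ
        (fun r => F (σ (h r).1) (h r).1 (σ (h r).2) (h r).2) (Finset.mem_univ r0)]
      refine congrArg₂ (· * ·) hFr0 ?_
      · apply Finset.prod_congr rfl
        intro r hr
        have hr0 : r ≠ r0 := (Finset.mem_erase.mp hr).1
        obtain ⟨⟨h1a, h1b⟩, ⟨h2a, h2b⟩⟩ := hfix r hr0
        rw [happ, happ, hτ, Equiv.swap_apply_of_ne_of_ne h1a h1b,
          Equiv.swap_apply_of_ne_of_ne h2a h2b]
    rw [hf]
    simp only []
    rw [hsign, hBeq, hFeq]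
    ring
  have hsum : ∑ σ : Equiv.Perm (Fin N), f σ = ∑ σ : Equiv.Perm (Fin N), f (σ * τ) :=
    (Equiv.sum_comp (Equiv.mulRight τ) f).symm
  have hneg : ∑ σ : Equiv.Perm (Fin N), f σ = - ∑ σ : Equiv.Perm (Fin N), f σ := by
    nth_rewrite 1 [hsum]
    rw [Finset.sum_congr rfl (fun σ _ => hswap σ)]
    exact Finset.sum_neg_distrib (f := f)
  have : ∑ σ : Equiv.Perm (Fin N), f σ = 0 := by linarith
  exact this

section KeyVanish

variable {Ω : Type*} [MeasureSpace Ω] [IsProbabilityMeasure (ℙ : Measure Ω)]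
variable {N : ℕ} {Ξ : Fin N → Fin N → Ω → ℝ}

lemma aux_expand_eps (F : Fin N → Fin N → Fin N → Fin N → ℝ) (S : Finset (Fin N)) {k : ℕ}
    (hk2 : S.card = 2 * k) (σ : Equiv.Perm (Fin N)) :
    ∑ ε ∈ S.powerset, (-1 : ℝ) ^ (S.card - ε.card) *
        (∑ i ∈ ε, ∑ j ∈ ε, F (σ i) i (σ j) j) ^ k
      = ∑ h ∈ (Fintype.piFinset fun _ : Fin k => S ×ˢ S).filter
          (fun h => Finset.univ.biUnion (fun r => {(h r).1, (h r).2}) = S),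
          ∏ r, F (σ (h r).1) (h r).1 (σ (h r).2) (h r).2 := by
  classical
  have step1 : ∀ ε : Finset (Fin N),
      (∑ i ∈ ε, ∑ j ∈ ε, F (σ i) i (σ j) j) ^ k
        = ∑ h ∈ Fintype.piFinset (fun _ : Fin k => ε ×ˢ ε),
            ∏ r, F (σ (h r).1) (h r).1 (σ (h r).2) (h r).2 := by
    intro ε
    rw [← Finset.sum_product (s := ε) (t := ε) (f := fun q => F (σ q.1) q.1 (σ q.2) q.2)]
    exact Finset.sum_pow' _ _ k
  calc ∑ ε ∈ S.powerset, (-1 : ℝ) ^ (S.card - ε.card) *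
        (∑ i ∈ ε, ∑ j ∈ ε, F (σ i) i (σ j) j) ^ k
      = ∑ ε ∈ S.powerset, ∑ h ∈ Fintype.piFinset (fun _ : Fin k => ε ×ˢ ε),
          (-1 : ℝ) ^ (S.card - ε.card) * ∏ r, F (σ (h r).1) (h r).1 (σ (h r).2) (h r).2 := by
        apply Finset.sum_congr rfl
        intro ε _
        rw [step1 ε, Finset.mul_sum]
    _ = ∑ h ∈ Fintype.piFinset (fun _ : Fin k => S ×ˢ S),
          ∑ ε ∈ S.powerset.filter
            (fun ε => Finset.univ.biUnion (fun r => {(h r).1, (h r).2}) ⊆ ε),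
          (-1 : ℝ) ^ (S.card - ε.card) * ∏ r, F (σ (h r).1) (h r).1 (σ (h r).2) (h r).2 := by
        apply Finset.sum_comm'
        intro ε h
        simp only [Fintype.mem_piFinset, Finset.mem_powerset, Finset.mem_filter,
          Finset.mem_product, Finset.biUnion_subset, Finset.mem_univ, forall_true_left,
          Finset.insert_subset_iff, Finset.singleton_subset_iff]
        constructor
        · rintro ⟨h1, h2⟩
          exact ⟨⟨h1, fun r => ⟨(h2 r).1, (h2 r).2⟩⟩, fun r => ⟨h1 (h2 r).1, h1 (h2 r).2⟩⟩
        · rintro ⟨⟨h1, h2⟩, _⟩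
          exact ⟨h1, fun r => h2 r⟩
    _ = ∑ h ∈ Fintype.piFinset (fun _ : Fin k => S ×ˢ S),
          (if Finset.univ.biUnion (fun r => {(h r).1, (h r).2}) = S then 1 else 0) *
            ∏ r, F (σ (h r).1) (h r).1 (σ (h r).2) (h r).2 := by
        apply Finset.sum_congr rfl
        intro h hmem
        rw [← Finset.sum_mul]
        congr 1
        apply aux_signsum
        rw [Finset.biUnion_subset]
        rw [Fintype.mem_piFinset] at hmem
        intro r _
        have := hmem r
        rw [Finset.mem_product] at this
        rw [Finset.insert_subset_iff, Finset.singleton_subset_iff]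
        exact ⟨this.1, this.2⟩
    _ = _ := by
        rw [Finset.sum_filter]
        apply Finset.sum_congr rfl
        intro h _
        by_cases hcond : Finset.univ.biUnion (fun r => {(h r).1, (h r).2}) = S <;>
          simp [hcond]

lemma key_vanish (hGauss : IsCenteredGaussianMatrix Ξ)
    {F : Fin N → Fin N → Fin N → Fin N → ℝ}
    (hFsymm : ∀ (v : Fin 4 → Fin N) (σ : Equiv.Perm (Fin 4)),
      F (v 0) (v 1) (v 2) (v 3) = F (v (σ 0)) (v (σ 1)) (v (σ 2)) (v (σ 3)))
    (hcov : ∀ i j k l, ∫ ω, Ξ i j ω * Ξ k l ω ∂(ℙ : Measure Ω) = F i j k l)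
    (B : Matrix (Fin N) (Fin N) ℝ) (S : Finset (Fin N)) (hS : S.Nonempty) :
    ∑ σ : Equiv.Perm (Fin N), ((Equiv.Perm.sign σ : ℤ) : ℝ) *
      ((∫ ω, ∏ i ∈ S, Ξ (σ i) i ω ∂(ℙ : Measure Ω)) * ∏ i ∈ Finset.univ \ S, B (σ i) i)
        = 0 := by
  classical
  rcases Nat.even_or_odd S.card with he | ho
  swap
  · -- odd case
    obtain ⟨k, hkk⟩ := ho
    have hg : gmC S.card = 0 := by rw [hkk]; exact gmC_odd k
    have hz : ∀ σ : Equiv.Perm (Fin N),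
        ∫ ω, ∏ i ∈ S, Ξ (σ i) i ω ∂(ℙ : Measure Ω) = 0 := by
      intro σ
      rw [(aux_Xprod hGauss hcov σ S).2]
      simp [hg]
    rw [Finset.sum_congr rfl (fun σ _ => by rw [hz σ, zero_mul, mul_zero])]
    exact Finset.sum_const_zero
  · obtain ⟨k, hkk⟩ := he
    have hk2 : S.card = 2 * k := by omega
    have hkpos : 0 < k := by
      have := Finset.card_pos.mpr hS
      omega
    have hdiv : S.card / 2 = k := by omega
    have hint : ∀ σ : Equiv.Perm (Fin N),
        ∫ ω, ∏ i ∈ S, Ξ (σ i) i ω ∂(ℙ : Measure Ω)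
          = (((polarSet S).card : ℝ)⁻¹ * gmC S.card) *
            ∑ ε ∈ S.powerset, (-1 : ℝ) ^ (S.card - ε.card) *
              (∑ i ∈ ε, ∑ j ∈ ε, F (σ i) i (σ j) j) ^ k := by
      intro σ
      rw [(aux_Xprod hGauss hcov σ S).2, hdiv, Finset.mul_sum, Finset.mul_sum]
      apply Finset.sum_congr rfl
      intro ε _
      ring
    calc ∑ σ : Equiv.Perm (Fin N), ((Equiv.Perm.sign σ : ℤ) : ℝ) *
          ((∫ ω, ∏ i ∈ S, Ξ (σ i) i ω ∂(ℙ : Measure Ω)) * ∏ i ∈ Finset.univ \ S, B (σ i) i)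
        = (((polarSet S).card : ℝ)⁻¹ * gmC S.card) * ∑ σ : Equiv.Perm (Fin N),
            ∑ h ∈ (Fintype.piFinset fun _ : Fin k => S ×ˢ S).filter
              (fun h => Finset.univ.biUnion (fun r => {(h r).1, (h r).2}) = S),
            (((Equiv.Perm.sign σ : ℤ) : ℝ) * ∏ i ∈ Finset.univ \ S, B (σ i) i)
              * ∏ r, F (σ (h r).1) (h r).1 (σ (h r).2) (h r).2 := by
          rw [Finset.mul_sum]
          apply Finset.sum_congr rfl
          intro σ _
          rw [hint σ, aux_expand_eps F S hk2 σ]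
          simp only [Finset.mul_sum, Finset.sum_mul]
          apply Finset.sum_congr rfl
          intro h _
          ring
      _ = (((polarSet S).card : ℝ)⁻¹ * gmC S.card) *
            ∑ h ∈ (Fintype.piFinset fun _ : Fin k => S ×ˢ S).filter
              (fun h => Finset.univ.biUnion (fun r => {(h r).1, (h r).2}) = S),
            ∑ σ : Equiv.Perm (Fin N),
            (((Equiv.Perm.sign σ : ℤ) : ℝ) * ∏ i ∈ Finset.univ \ S, B (σ i) i)
              * ∏ r, F (σ (h r).1) (h r).1 (σ (h r).2) (h r).2 := by
          rw [Finset.sum_comm]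
      _ = 0 := by
          rw [Finset.sum_congr rfl (fun h hmem => ?_), Finset.sum_const_zero, mul_zero]
          rw [Finset.mem_filter, Fintype.mem_piFinset] at hmem
          apply aux_involution F hFsymm B S hkpos hk2 h
          · intro r
            have := hmem.1 r
            rw [Finset.mem_product] at this
            exact this
          · exact hmem.2

end KeyVanish

end AuxAll

theorem expected_det_xi_plus_B
    {Ω : Type*} [MeasureSpace Ω] [IsProbabilityMeasure (ℙ : Measure Ω)]
    (N : ℕ) (Ξ : Fin N → Fin N → Ω → ℝ)
    (F : Fin N → Fin N → Fin N → Fin N → ℝ)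
    (hΞsymm : ∀ i j ω, Ξ i j ω = Ξ j i ω)
    (hGauss : IsCenteredGaussianMatrix Ξ)
    (hFsymm : ∀ (v : Fin 4 → Fin N) (σ : Equiv.Perm (Fin 4)),
      F (v 0) (v 1) (v 2) (v 3) = F (v (σ 0)) (v (σ 1)) (v (σ 2)) (v (σ 3)))
    (hcov : ∀ i j k l, ∫ ω, Ξ i j ω * Ξ k l ω ∂(ℙ : Measure Ω) = F i j k l)
    (B : Matrix (Fin N) (Fin N) ℝ) (hB : B.IsSymm) :
    ∫ ω, (Matrix.of fun i j => Ξ i j ω + B i j).det ∂(ℙ : Measure Ω) = B.det := by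
  classical
  have hdet : (fun ω => (Matrix.of fun i j => Ξ i j ω + B i j).det)
      = fun ω => ∑ σ : Equiv.Perm (Fin N), ((Equiv.Perm.sign σ : ℤ) : ℝ) *
          ∑ S ∈ (Finset.univ : Finset (Fin N)).powerset,
            (∏ i ∈ S, Ξ (σ i) i ω) * ∏ i ∈ Finset.univ \ S, B (σ i) i := by
    funext ω
    rw [Matrix.det_apply']
    apply Finset.sum_congr rfl
    intro σ _
    congr 1
    rw [← Finset.prod_add]
    apply Finset.prod_congr rfl
    intro i _
    simp [Matrix.of_apply]
  rw [hdet]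
  have hIprod : ∀ (σ : Equiv.Perm (Fin N)) (S : Finset (Fin N)),
      Integrable (fun ω => (∏ i ∈ S, Ξ (σ i) i ω) * ∏ i ∈ Finset.univ \ S, B (σ i) i)
        (ℙ : Measure Ω) :=
    fun σ S => ((aux_Xprod hGauss hcov σ S).1).mul_const _
  have hIsum : ∀ σ : Equiv.Perm (Fin N),
      Integrable (fun ω => ∑ S ∈ (Finset.univ : Finset (Fin N)).powerset,
        (∏ i ∈ S, Ξ (σ i) i ω) * ∏ i ∈ Finset.univ \ S, B (σ i) i) (ℙ : Measure Ω) :=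
    fun σ => integrable_finset_sum _ (fun S _ => hIprod σ S)
  rw [integral_finset_sum _ (fun σ _ => (hIsum σ).const_mul _)]
  have hper : ∀ σ : Equiv.Perm (Fin N),
      ∫ ω, ((Equiv.Perm.sign σ : ℤ) : ℝ) *
          ∑ S ∈ (Finset.univ : Finset (Fin N)).powerset,
            (∏ i ∈ S, Ξ (σ i) i ω) * ∏ i ∈ Finset.univ \ S, B (σ i) i ∂(ℙ : Measure Ω)
        = ∑ S ∈ (Finset.univ : Finset (Fin N)).powerset,
            ((Equiv.Perm.sign σ : ℤ) : ℝ) *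
            ((∫ ω, ∏ i ∈ S, Ξ (σ i) i ω ∂(ℙ : Measure Ω)) *
              ∏ i ∈ Finset.univ \ S, B (σ i) i) := by
    intro σ
    rw [integral_const_mul, integral_finset_sum _ (fun S _ => hIprod σ S), Finset.mul_sum]
    apply Finset.sum_congr rfl
    intro S _
    rw [integral_mul_const]
  rw [Finset.sum_congr rfl (fun σ _ => hper σ), Finset.sum_comm]
  rw [Finset.sum_eq_single (∅ : Finset (Fin N))]
  · have h1 : ∀ σ : Equiv.Perm (Fin N),
        ∫ ω, ∏ i ∈ (∅ : Finset (Fin N)), Ξ (σ i) i ω ∂(ℙ : Measure Ω) = 1 := by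
      intro σ
      simp [measure_univ]
    rw [Finset.sum_congr rfl (fun σ _ => by rw [h1 σ, one_mul])]
    rw [Matrix.det_apply']
    apply Finset.sum_congr rfl
    intro σ _
    rw [Finset.sdiff_empty]
  · intro S _ hne
    exact key_vanish hGauss hFsymm hcov B S (Finset.nonempty_iff_ne_empty.mpr hne)
  · intro hmem
    exact absurd (Finset.mem_powerset.mpr (Finset.empty_subset _)) hmem
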